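/- arXiv:1701.01580 — 2 statements merged into one kernel-verified Lean document; each statement's English description precedes it below -/
import Mathlib

section
/- For an infinite word w over a finite alphabet, the oc-sequence oc(w) is ultimately periodic if and only if w is either (purely) periodic or not recurrent. Moreover, if w is periodic then oc(w) ends in 1^ω, and if w is not recurrent then oc(w) ends in 0^ω. -/
open scoped Classical

variable {α : Type*}

def IsBorder (u w : List α) : Prop := u <+: w ∧ u <:+ w ∧ u ≠ w

def InternalOcc (u w : List α) : Prop := ∃ p s : List α, p ≠ [] ∧ s ≠ [] ∧ w = p ++ u ++ s

def ClosedWord (w : List α) : Prop := w = [] ∨ ∃ u, IsBorder u w ∧ ¬ InternalOcc u w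

noncomputable def minPer (w : List α) : ℕ :=
  if w = [] then 1 else sInf {p | ∃ v, IsBorder v w ∧ p = w.length - v.length}

noncomputable def ocL (w : List α) : List ℕ :=
  (List.range w.length).map fun i => if ClosedWord (w.take (i+1)) then 1 else 0

def prefW (w : ℕ → α) (n : ℕ) : List α := (List.range n).map w

noncomputable def ocI (w : ℕ → α) : ℕ → ℕ := fun n =>
  if ClosedWord (prefW w (n+1)) then 1 else 0

def InfixAt (w : ℕ → α) (u : List α) (i : ℕ) : Prop :=
  u = (List.range u.length).map fun j => w (i + j)

def RecurrentWord (w : ℕ → α) : Prop :=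
  ∀ u : List α, (∃ i, InfixAt w u i) → ∀ N, ∃ i, N ≤ i ∧ InfixAt w u i

def UltPeriodic (s : ℕ → α) : Prop := ∃ p, 0 < p ∧ ∃ N, ∀ n, N ≤ n → s (n + p) = s n

def PerWord (s : ℕ → α) : Prop := ∃ p, 0 < p ∧ ∀ n, s (n + p) = s n

def OccurrenceAt (u w : List α) (i : ℕ) : Prop := i + u.length ≤ w.length ∧ u <+: w.drop i

def RepeatedIn (u w : List α) : Prop := ∃ i j, i < j ∧ OccurrenceAt u w i ∧ OccurrenceAt u w j

def CompleteReturnTo (w u : List α) : Prop :=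
  u <+: w ∧ u <:+ w ∧ u ≠ w ∧ ∀ i, OccurrenceAt u w i → i = 0 ∨ i = w.length - u.length

def BalancedWord (w : List Bool) : Prop :=
  ∀ u v : List Bool, u <:+: w → v <:+: w → u.length = v.length →
    ((u.count true : ℤ) - v.count true).natAbs ≤ 1

def RightSpecialSturmian (w : List Bool) : Prop := ∀ x : Bool, BalancedWord (w ++ [x])

def stdSeq (d : ℕ → ℕ) : ℕ → List Bool
  | 0 => [true]
  | 1 => [false]
  | n+2 => (List.replicate (d n) (stdSeq d (n+1))).flatten ++ stdSeq d n

def stdInf (d : ℕ → ℕ) : ℕ → Bool := fun i => (stdSeq d (i+2)).getD i false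

def IsStandardWord (s : List Bool) : Prop :=
  ∃ d : ℕ → ℕ, (∀ n, 1 ≤ n → 1 ≤ d n) ∧ ∃ m, s = stdSeq d m

def IsCentral (u : List Bool) : Prop := ∃ x y : Bool, x ≠ y ∧ IsStandardWord (u ++ [x, y])

def LeftSpecial (u w : List Bool) : Prop := (false :: u) <:+: w ∧ (true :: u) <:+: w

def RightSpecial (u w : List Bool) : Prop := (u ++ [false]) <:+: w ∧ (u ++ [true]) <:+: w

def IsSemicentral (v : List Bool) : Prop :=
  ∃ u : List Bool,
    (u <+: v ∧ RepeatedIn u v ∧ ∀ z, z <+: v → RepeatedIn z v → z.length ≤ u.length) ∧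
    (u <:+ v ∧ RepeatedIn u v ∧ ∀ z, z <:+ v → RepeatedIn z v → z.length ≤ u.length) ∧
    (LeftSpecial u v ∧ ∀ z, LeftSpecial z v → z.length ≤ u.length ∧ (z.length = u.length → z = u)) ∧
    (RightSpecial u v ∧ ∀ z, RightSpecial z v → z.length ≤ u.length ∧ (z.length = u.length → z = u))

def contFront : List ℕ → ℕ
  | [] => 1
  | [x] => x
  | x :: y :: l => x * contFront (y :: l) + contFront l

def paperK (l : List ℕ) : ℕ := contFront l.reverse

noncomputable def lbl (u : List α) : ℕ := sSup {n | ∃ v, IsBorder v u ∧ v.length = n}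

noncomputable def Bp (w : List α) (i : ℕ) : ℕ :=
  (Finset.range (i+1)).sup fun j => lbl (w.take j)


lemma prefW_length (w : ℕ → α) (n : ℕ) : (prefW w n).length = n := by simp [prefW]

lemma infixAt_prefW (w : ℕ → α) (k i : ℕ) :
    InfixAt w (prefW w k) i ↔ ∀ j, j < k → w (i + j) = w j := by
  unfold InfixAt
  rw [prefW_length]
  constructor
  · intro h j hj
    have : (prefW w k)[j]'(by simpa [prefW_length] using hj)
        = ((List.range k).map fun j => w (i + j))[j]'(by simpa using hj) := by
      exact List.getElem_of_eq h _
    simpa [prefW] using this.symm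
  · intro h
    apply List.ext_getElem (by simp [prefW])
    intro j h1 h2
    simp only [prefW, List.getElem_map, List.getElem_range]
    exact (h j (by simpa [prefW] using h1)).symm

lemma infixAt_iff_pointwise (w : ℕ → α) (u : List α) (i : ℕ) :
    InfixAt w u i ↔ ∀ j (_ : j < u.length), u[j] = w (i + j) := by
  constructor
  · intro h j hj
    have : u[j] = ((List.range u.length).map fun j => w (i + j))[j]'(by simpa using hj) :=
      List.getElem_of_eq h _
    simpa using this
  · intro h
    apply List.ext_getElem (by simp)
    intro j h1 h2
    simpa using h j h1

lemma infixAt_nil (w : ℕ → α) (i : ℕ) : InfixAt w [] i := by simp [InfixAt]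

lemma infixAt_of_decomp {w : ℕ → α} {u p s : List α} {n : ℕ}
    (h : prefW w n = p ++ u ++ s) : InfixAt w u p.length := by
  rw [infixAt_iff_pointwise]
  intro j hj
  have hlen : n = p.length + u.length + s.length := by
    have := congrArg List.length h
    simp [prefW_length] at this
    omega
  have hb : p.length + j < n := by omega
  have h2 : (prefW w n)[p.length + j]'(by simpa [prefW_length] using hb)
      = (p ++ u ++ s)[p.length + j]'(by rw [← h]; simpa [prefW_length] using hb) :=
    List.getElem_of_eq h _
  have h3 : (prefW w n)[p.length + j]'(by simpa [prefW_length] using hb) = w (p.length + j) := by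
    simp [prefW]
  rw [← h3, h2, List.getElem_append]
  rw [dif_pos (show p.length + j < (p ++ u).length by simp; omega)]
  rw [List.getElem_append, dif_neg (by omega)]
  congr 1
  omega

lemma decomp_of_infixAt {w : ℕ → α} {u : List α} {t n : ℕ}
    (h : InfixAt w u t) (hn : t + u.length ≤ n) :
    prefW w n = prefW w t ++ u ++ (prefW w n).drop (t + u.length) := by
  apply List.ext_getElem
  · simp [prefW_length]; omega
  · intro j h1 h2
    rw [infixAt_iff_pointwise] at h
    have hj : j < n := by simpa [prefW_length] using h1
    have hL : (prefW w n)[j]'h1 = w j := by simp [prefW]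
    rw [hL, List.getElem_append]
    split_ifs with hc1
    · rw [List.getElem_append]
      split_ifs with hc2
      · simp [prefW]
      · rw [h (j - (prefW w t).length) (by simp only [List.length_append, prefW_length] at hc1 hc2 ⊢; omega)]
        congr 1
        simp only [List.length_append, prefW_length] at hc1 hc2 ⊢
        omega
    · rw [List.getElem_drop]
      have hidx : t + u.length + (j - (prefW w t ++ u).length) = j := by
        simp only [List.length_append, prefW_length] at hc1 ⊢
        omega
      simp only [hidx]
      simp [prefW]

lemma prefix_prefW {w : ℕ → α} {u : List α} {n : ℕ} :
    u <+: prefW w n ↔ u.length ≤ n ∧ u = prefW w u.length := by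
  constructor
  · intro h
    have hlen : u.length ≤ n := by
      have := h.length_le
      simpa [prefW_length] using this
    refine ⟨hlen, ?_⟩
    have : u = (prefW w n).take u.length := List.prefix_iff_eq_take.mp h
    rw [this]
    simp [prefW, ← List.map_take, List.take_range, Nat.min_eq_left hlen]
  · rintro ⟨h1, h2⟩
    rw [h2]
    have : (prefW w n).take u.length = prefW w u.length := by
      simp [prefW, ← List.map_take, List.take_range, Nat.min_eq_left h1]
    rw [← this]
    exact List.take_prefix _ _

lemma suffix_prefW {w : ℕ → α} {u : List α} {n : ℕ} :
    u <:+ prefW w n ↔ u.length ≤ n ∧ InfixAt w u (n - u.length) := by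
  constructor
  · rintro ⟨p, hp⟩
    have hlen : p.length + u.length = n := by
      have := congrArg List.length hp
      simp [prefW_length] at this
      omega
    have hd : prefW w n = p ++ u ++ [] := by rw [List.append_nil]; exact hp.symm
    have := infixAt_of_decomp hd
    constructor
    · omega
    · have hpl : p.length = n - u.length := by omega
      rwa [hpl] at this
  · rintro ⟨h1, h2⟩
    have := decomp_of_infixAt (n := n) h2 (by omega)
    rw [show n - u.length + u.length = n by omega] at this
    rw [List.drop_eq_nil_of_le (by simp [prefW_length])] at this
    exact ⟨prefW w (n - u.length), by rw [this, List.append_nil]⟩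

lemma internal_prefW {w : ℕ → α} {u : List α} {n : ℕ} :
    InternalOcc u (prefW w n) ↔ ∃ t, 1 ≤ t ∧ t + u.length < n ∧ InfixAt w u t := by
  constructor
  · rintro ⟨p, s, hp, hs, heq⟩
    refine ⟨p.length, ?_, ?_, ?_⟩
    · exact Nat.one_le_iff_ne_zero.mpr (by simpa using hp)
    · have := congrArg List.length heq
      simp [prefW_length] at this
      have hs' : s.length ≠ 0 := by simpa using hs
      omega
    · exact infixAt_of_decomp heq
  · rintro ⟨t, h1, h2, h3⟩
    refine ⟨prefW w t, (prefW w n).drop (t + u.length), ?_, ?_, ?_⟩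
    · intro hc
      have := congrArg List.length hc
      simp [prefW_length] at this
      omega
    · intro hc
      have := congrArg List.length hc
      simp [prefW_length] at this
      omega
    · exact decomp_of_infixAt h3 (by omega)

lemma closed_char {w : ℕ → α} {n : ℕ} (hn : 2 ≤ n) :
    ClosedWord (prefW w n) ↔
      ∃ ℓ, 1 ≤ ℓ ∧ ℓ < n ∧ (∀ j, j < ℓ → w (n - ℓ + j) = w j) ∧
        ∀ t, 1 ≤ t → t + ℓ < n → ¬ (∀ j, j < ℓ → w (t + j) = w j) := by
  constructor
  · rintro (hnil | ⟨u, ⟨hpre, hsuf, hne⟩, hint⟩)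
    · exfalso
      have := congrArg List.length hnil
      simp [prefW_length] at this
      omega
    · obtain ⟨hlen, hu⟩ := prefix_prefW.mp hpre
      set ℓ := u.length with hℓ
      have hℓn : ℓ < n := by
        rcases Nat.lt_or_ge ℓ n with h | h
        · exact h
        · exfalso
          apply hne
          rw [hu]
          congr 1
          omega
      have hℓ1 : 1 ≤ ℓ := by
        by_contra hc
        have h0 : u = [] := List.length_eq_zero_iff.mp (by omega)
        apply hint
        rw [internal_prefW]
        exact ⟨1, le_refl _, by simp [h0]; omega, by rw [h0]; exact infixAt_nil w 1⟩
      refine ⟨ℓ, hℓ1, hℓn, ?_, ?_⟩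
      · have := (suffix_prefW.mp hsuf).2
        rw [hu] at this
        rw [infixAt_prefW] at this
        simpa [prefW_length] using this
      · intro t ht1 ht2 hocc
        apply hint
        rw [internal_prefW]
        refine ⟨t, ht1, by rw [← hℓ]; omega, ?_⟩
        rw [hu, infixAt_prefW]
        intro j hj
        exact hocc j (by simpa [prefW_length] using hj)
  · rintro ⟨ℓ, h1, h2, h3, h4⟩
    right
    refine ⟨prefW w ℓ, ⟨?_, ?_, ?_⟩, ?_⟩
    · exact prefix_prefW.mpr ⟨by simp [prefW_length]; omega, by simp [prefW_length]⟩
    · rw [suffix_prefW]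
      refine ⟨by simp [prefW_length]; omega, ?_⟩
      rw [prefW_length, infixAt_prefW]
      exact h3
    · intro hc
      have := congrArg List.length hc
      simp [prefW_length] at this
      omega
    · intro hc
      rw [internal_prefW] at hc
      obtain ⟨t, ht1, ht2, ht3⟩ := hc
      rw [prefW_length] at ht2
      rw [infixAt_prefW] at ht3
      exact h4 t ht1 ht2 ht3

lemma ocI_eq_one_iff {w : ℕ → α} {n : ℕ} : ocI w n = 1 ↔ ClosedWord (prefW w (n+1)) := by
  unfold ocI
  split_ifs with h <;> simp [h]

lemma ocI_eq_zero_iff {w : ℕ → α} {n : ℕ} : ocI w n = 0 ↔ ¬ ClosedWord (prefW w (n+1)) := by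
  unfold ocI
  split_ifs with h <;> simp [h]

lemma shift_per {w : ℕ → α} {q : ℕ} (hper : ∀ m, w (m + q) = w m) :
    ∀ k m, w (m + k * q) = w m := by
  intro k
  induction k with
  | zero => simp
  | succ k ih =>
    intro m
    have : m + (k+1) * q = (m + k * q) + q := by ring
    rw [this, hper, ih]

lemma perWord_recurrent {w : ℕ → α} (h : PerWord w) : RecurrentWord w := by
  obtain ⟨q, hq, hper⟩ := h
  intro u ⟨i, hu⟩ N
  refine ⟨i + N * q, ?_, ?_⟩
  · have : N ≤ N * q := Nat.le_mul_of_pos_right N hq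
    omega
  · rw [infixAt_iff_pointwise] at hu ⊢
    intro j hj
    rw [hu j hj]
    have : i + N * q + j = (i + j) + N * q := by ring
    rw [this, shift_per hper]

lemma ev_one {w : ℕ → α} (h : PerWord w) : ∃ N, ∀ n, N ≤ n → ocI w n = 1 := by
  obtain ⟨q, hq, hper⟩ := h
  set S : ℕ → Set ℕ := fun k => {i | 1 ≤ i ∧ ∀ j, j < k → w (i + j) = w j} with hS
  have hqmem : ∀ k, q ∈ S k := by
    intro k
    exact ⟨hq, fun j _ => by rw [Nat.add_comm]; exact hper j⟩
  have hmem : ∀ k, sInf (S k) ∈ S k := fun k => Nat.sInf_mem ⟨q, hqmem k⟩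
  have hle : ∀ k, sInf (S k) ≤ q := fun k => Nat.sInf_le (hqmem k)
  have hmono : Monotone (fun k => sInf (S k)) := by
    intro k k' hk
    apply Nat.sInf_le
    obtain ⟨h1, h2⟩ := hmem k'
    exact ⟨h1, fun j hj => h2 j (by omega)⟩
  have hbdd : BddAbove (Set.range fun k => sInf (S k)) := ⟨q, by rintro _ ⟨k, rfl⟩; exact hle k⟩
  obtain ⟨k0, hk0⟩ := Nat.sSup_mem (Set.range_nonempty fun k => sInf (S k)) hbdd
  set R := sInf (S k0) with hRdef
  have hconst : ∀ k, k0 ≤ k → sInf (S k) = R := by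
    intro k hk
    refine le_antisymm ?_ (hmono hk)
    have h1 : sInf (S k) ≤ sSup (Set.range fun k => sInf (S k)) := le_csSup hbdd ⟨k, rfl⟩
    have h2 : (fun k => sInf (S k)) k0 = sSup (Set.range fun k => sInf (S k)) := hk0
    simp only [] at h2
    omega
  have hR1 : 1 ≤ R := (hmem k0).1
  refine ⟨R + k0 + 1, fun n hn => ?_⟩
  rw [ocI_eq_one_iff, closed_char (by omega)]
  set ℓ := n + 1 - R with hℓ
  have hℓk0 : k0 + 1 ≤ ℓ := by omega
  have hfr : sInf (S ℓ) = R := hconst ℓ (by omega)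
  refine ⟨ℓ, by omega, by omega, ?_, ?_⟩
  · intro j hj
    have : n + 1 - ℓ = R := by omega
    rw [this]
    have := hmem ℓ
    rw [hfr] at this
    exact this.2 j hj
  · intro t ht1 ht2 hocc
    have : sInf (S ℓ) ≤ t := Nat.sInf_le ⟨ht1, hocc⟩
    omega

lemma ev_zero {w : ℕ → α} (h : ¬ RecurrentWord w) : ∃ N, ∀ n, N ≤ n → ocI w n = 0 := by
  have h' := h
  rw [RecurrentWord] at h'
  push_neg at h'
  obtain ⟨u, ⟨i0, hu0⟩, M, hM⟩ := h'
  have hi0 : i0 < M := by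
    by_contra hc
    exact hM i0 (by omega) hu0
  have hu0' : ∀ j (_ : j < u.length), u[j] = w (i0 + j) := (infixAt_iff_pointwise w u i0).mp hu0
  by_contra hcon
  push_neg at hcon
  have hcl : ∀ N, ∃ m, N ≤ m ∧ 2 ≤ m ∧ ClosedWord (prefW w m) := by
    intro N
    obtain ⟨n, hn1, hn2⟩ := hcon (N + 1)
    have hn2' : ClosedWord (prefW w (n+1)) := by
      by_contra hcc
      exact hn2 (ocI_eq_zero_iff.mpr hcc)
    exact ⟨n+1, by omega, by omega, hn2'⟩
  set B := i0 + u.length + 1 with hB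
  set F : ℕ → ℕ := fun ℓ => sInf {i | 1 ≤ i ∧ ∀ j, j < ℓ → w (i + j) = w j} + ℓ with hF
  set N2 := (Finset.range B).sup F with hN2
  have key : ∃ t, 1 ≤ t ∧ t ≤ M ∧ ∀ L, ∃ k, L ≤ k ∧ ∀ j, j < k → w (t + j) = w j := by
    by_contra hno
    push_neg at hno
    have hno' : ∀ t, ∃ L, ∀ k, L ≤ k → (1 ≤ t → t ≤ M → ∃ j, j < k ∧ w (t + j) ≠ w j) := by
      intro t
      by_cases h1 : 1 ≤ t
      · by_cases h2 : t ≤ M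
        · obtain ⟨L, hL⟩ := hno t h1 h2
          exact ⟨L, fun k hk _ _ => hL k hk⟩
        · exact ⟨0, fun k _ _ h2' => absurd h2' h2⟩
      · exact ⟨0, fun k _ h1' _ => absurd h1' h1⟩
    choose Lf hLf using hno'
    set L0 := (Finset.range (M+1)).sup Lf with hL0
    obtain ⟨m, hm1, hm2, hm3⟩ := hcl (N2 + L0 + M + B + 2)
    obtain ⟨ℓ, hℓ1, hℓ2, hocc, hmin⟩ := (closed_char hm2).mp hm3
    have ht1 : 1 ≤ m - ℓ := by omega
    rcases Nat.lt_or_ge ℓ B with hcase | hcase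
    · have hmem : (m - ℓ) ∈ {i | 1 ≤ i ∧ ∀ j, j < ℓ → w (i + j) = w j} := ⟨ht1, hocc⟩
      have hinf : sInf {i | 1 ≤ i ∧ ∀ j, j < ℓ → w (i + j) = w j} = m - ℓ := by
        refine le_antisymm (Nat.sInf_le hmem) ?_
        by_contra hc
        push_neg at hc
        have h5 := Nat.sInf_mem (⟨m - ℓ, hmem⟩ : Set.Nonempty _)
        exact hmin _ h5.1 (by omega) h5.2
      have hFm : F ℓ = m := by
        rw [hF]
        simp only []
        rw [hinf]
        omega
      have hle : F ℓ ≤ N2 := Finset.le_sup (by simp only [Finset.mem_range]; omega)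
      omega
    · have hinf_u : InfixAt w u ((m - ℓ) + i0) := by
        rw [infixAt_iff_pointwise]
        intro j hj
        rw [hu0' j hj]
        have he : (m - ℓ) + i0 + j = (m - ℓ) + (i0 + j) := by omega
        rw [he]
        exact (hocc (i0 + j) (by omega)).symm
      have htM : (m - ℓ) + i0 < M := by
        by_contra hc
        exact hM _ (by omega) hinf_u
      have h6 : Lf (m - ℓ) ≤ ℓ := by
        have h7 : Lf (m - ℓ) ≤ L0 := Finset.le_sup (by simp only [Finset.mem_range]; omega)
        omega
      obtain ⟨j, hj1, hj2⟩ := hLf (m - ℓ) ℓ h6 ht1 (by omega)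
      exact hj2 (hocc j hj1)
  obtain ⟨t, ht1, htM, hper⟩ := key
  have hperiod : ∀ nn, w (nn + t) = w nn := by
    intro nn
    obtain ⟨k, hk1, hk2⟩ := hper (nn+1)
    rw [Nat.add_comm]
    exact hk2 nn (by omega)
  exact h (perWord_recurrent ⟨t, ht1, hperiod⟩)

lemma forward_per {w : ℕ → α} (hrec : RecurrentWord w) (hup : UltPeriodic (ocI w))
    : PerWord w := by
  obtain ⟨p, hp, N, hper⟩ := hup
  -- the occurrence sets and first-return function
  set S : ℕ → Set ℕ := fun k => {i | 1 ≤ i ∧ ∀ j, j < k → w (i + j) = w j} with hS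
  have hSne : ∀ k, (S k).Nonempty := by
    intro k
    have h0 : InfixAt w (prefW w k) 0 := by
      rw [infixAt_prefW]
      intro j hj
      simp
    obtain ⟨i, hi1, hi2⟩ := hrec (prefW w k) ⟨0, h0⟩ 1
    rw [infixAt_prefW] at hi2
    exact ⟨i, hi1, hi2⟩
  set r : ℕ → ℕ := fun k => sInf (S k) with hr
  have hrmem : ∀ k, r k ∈ S k := fun k => Nat.sInf_mem (hSne k)
  have hr1 : ∀ k, 1 ≤ r k := fun k => (hrmem k).1
  have hrocc : ∀ k j, j < k → w (r k + j) = w j := fun k => (hrmem k).2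
  have hrmin : ∀ k t, 1 ≤ t → t < r k → ¬ (∀ j, j < k → w (t + j) = w j) := by
    intro k t h1 h2 hocc
    have : r k ≤ t := Nat.sInf_le ⟨h1, hocc⟩
    omega
  have hrmono : Monotone r := by
    intro k k' hk
    apply Nat.sInf_le
    exact ⟨hr1 k', fun j hj => hrocc k' j (by omega)⟩
  -- g k = r k + k, closed prefixes
  have hgmono : StrictMono (fun k => r k + k) := by
    apply strictMono_nat_of_lt_succ
    intro k
    have h := hrmono (show k ≤ k + 1 by omega)
    omega
  have hclosed_g : ∀ k, 1 ≤ k → ClosedWord (prefW w (r k + k)) := by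
    intro k hk
    rw [closed_char (by have := hr1 k; omega)]
    refine ⟨k, hk, by have := hr1 k; omega, ?_, ?_⟩
    · intro j hj
      have he : r k + k - k = r k := by omega
      rw [he]
      exact hrocc k j hj
    · intro t ht1 ht2
      exact hrmin k t ht1 (by omega)
  -- propagation of ult periodicity
  have hper' : ∀ n, N ≤ n → ∀ j, ocI w (n + j * p) = ocI w n := by
    intro n hn j
    induction j with
    | zero => simp
    | succ j ih =>
      have he : n + (j+1) * p = (n + j * p) + p := by ring
      rw [he, hper (n + j * p) (by omega), ih]
  -- find a 1 beyond N
  set k1 := N + 1 with hk1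
  set n1 := r k1 + k1 - 1 with hn1
  have hn1N : N ≤ n1 := by have := hr1 k1; omega
  have hocn1 : ocI w n1 = 1 := by
    rw [ocI_eq_one_iff]
    have he : n1 + 1 = r k1 + k1 := by have := hr1 k1; omega
    rw [he]
    exact hclosed_g k1 (by omega)
  -- closed prefixes at arithmetic progression
  have hclosedj : ∀ j, ClosedWord (prefW w (n1 + j * p + 1)) := by
    intro j
    rw [← ocI_eq_one_iff]
    rw [hper' n1 hn1N j, hocn1]
  -- extract the ℓ's
  have hch : ∀ j : ℕ, ∃ ℓ, 1 ≤ ℓ ∧ ℓ < n1 + j * p + 1 ∧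
      (∀ i, i < ℓ → w (n1 + j * p + 1 - ℓ + i) = w i) ∧
      ∀ t, 1 ≤ t → t + ℓ < n1 + j * p + 1 → ¬ (∀ i, i < ℓ → w (t + i) = w i) := by
    intro j
    exact (closed_char (by have := hr1 k1; omega)).mp (hclosedj j)
  choose ℓf hℓ1 hℓ2 hℓocc hℓmin using hch
  -- r (ℓf j) = m j - ℓf j, so g (ℓf j) = m j
  have hgℓ : ∀ j, r (ℓf j) + ℓf j = n1 + j * p + 1 := by
    intro j
    have hmem : (n1 + j * p + 1 - ℓf j) ∈ S (ℓf j) := ⟨by have := hℓ2 j; omega, hℓocc j⟩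
    have hle : r (ℓf j) ≤ n1 + j * p + 1 - ℓf j := Nat.sInf_le hmem
    have hge : ¬ (r (ℓf j) < n1 + j * p + 1 - ℓf j) := by
      intro hc
      exact hℓmin j (r (ℓf j)) (hr1 _) (by omega) (hrocc (ℓf j))
    have := hℓ2 j
    omega
  -- ℓf strictly monotone in j, hence ℓf j ≥ j + ℓf 0 ≥ ℓf 0
  have hℓmono : StrictMono ℓf := by
    apply strictMono_nat_of_lt_succ
    intro j
    have h1 := hgℓ j
    have h2 := hgℓ (j+1)
    have : r (ℓf j) + ℓf j < r (ℓf (j+1)) + ℓf (j+1) := by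
      rw [h1, h2]
      have : 0 < p := hp
      nlinarith
    by_contra hc
    push_neg at hc
    have := hrmono hc
    omega
  -- gap bound: for k ≥ ℓf 0, r (k+1) + 1 ≤ r k + p
  have hgap : ∀ k, ℓf 0 ≤ k → r (k+1) + 1 ≤ r k + p := by
    intro k hk
    have hex : ∃ j, k < ℓf j := ⟨k + 1, by have : k + 1 ≤ ℓf (k+1) := hℓmono.le_apply; omega⟩
    set j0 := Nat.find hex with hj0
    have hfound : k < ℓf j0 := Nat.find_spec hex
    have hj0pos : j0 ≠ 0 := by
      intro hc
      rw [hc] at hfound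
      omega
    have hjj' : j0 - 1 + 1 = j0 := Nat.succ_pred_eq_of_ne_zero hj0pos
    have hprev : ¬ (k < ℓf (j0 - 1)) := Nat.find_min hex (by omega)
    push_neg at hprev
    have e1 : r (k+1) + (k+1) ≤ r (ℓf j0) + ℓf j0 := by
      have h1 : k + 1 ≤ ℓf j0 := hfound
      have := hrmono h1
      omega
    have e2 : r (ℓf (j0 - 1)) + ℓf (j0 - 1) ≤ r k + k := by
      have := hrmono hprev
      omega
    have e3 := hgℓ j0
    have e4 := hgℓ (j0 - 1)
    have e5 : j0 * p = (j0 - 1) * p + p := by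
      conv_lhs => rw [← hjj']
      ring
    omega
  -- dichotomy
  by_cases hc : ∀ δ, ∃ L, ∀ k, L ≤ k → (1 ≤ δ → r (k+1) ≠ r k + δ)
  · choose Lf hLf using hc
    set K := max (ℓf 0) ((Finset.range (p+1)).sup Lf) with hK
    have hstep : ∀ k, K ≤ k → r (k+1) = r k := by
      intro k hk
      by_contra hne
      have hlt : r k < r (k+1) := by
        have := hrmono (show k ≤ k + 1 by omega)
        omega
      set δ := r (k+1) - r k with hδ
      have hδ1 : 1 ≤ δ := by omega
      have hδp : δ < p := by
        have := hgap k (by omega)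
        omega
      have hLfle : Lf δ ≤ K := by
        have : Lf δ ≤ (Finset.range (p+1)).sup Lf :=
          Finset.le_sup (by simp only [Finset.mem_range]; omega)
        omega
      exact hLf δ k (by omega) hδ1 (by omega)
    have hconst : ∀ k, K ≤ k → r k = r K := by
      intro k hk
      obtain ⟨d, rfl⟩ := Nat.exists_eq_add_of_le hk
      clear hk
      induction d with
      | zero => rfl
      | succ d ih =>
        have : K + (d + 1) = (K + d) + 1 := by omega
        rw [this, hstep (K + d) (by omega), ih]
    refine ⟨r K, hr1 K, ?_⟩
    intro nn
    set k := max K (nn + 1) with hk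
    have h1 : r k = r K := hconst k (by omega)
    have h2 := hrocc k nn (by omega)
    rw [h1] at h2
    rw [Nat.add_comm]
    exact h2
  · push_neg at hc
    obtain ⟨δ, hδ⟩ := hc
    obtain ⟨k', _, hδ1, _⟩ := hδ 0
    refine ⟨δ, hδ1, ?_⟩
    intro nn
    obtain ⟨k, hk1, _, hk3⟩ := hδ (nn + δ + 1)
    have h1 := hrocc k (δ + nn) (by omega)
    have h2 := hrocc (k+1) nn (by omega)
    rw [hk3] at h2
    have he : r k + δ + nn = r k + (δ + nn) := by omega
    rw [he, h1] at h2
    rw [Nat.add_comm]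
    exact h2

theorem stmt8 {α : Type*} [Fintype α] (w : ℕ → α) :
    (UltPeriodic (ocI w) ↔ (PerWord w ∨ ¬ RecurrentWord w)) ∧
    (PerWord w → ∃ N, ∀ n, N ≤ n → ocI w n = 1) ∧
    (¬ RecurrentWord w → ∃ N, ∀ n, N ≤ n → ocI w n = 0) := by
  refine ⟨⟨?_, ?_⟩, fun h => ev_one h, fun h => ev_zero h⟩
  · intro hup
    by_cases hrec : RecurrentWord w
    · exact Or.inl (forward_per hrec hup)
    · exact Or.inr hrec
  · rintro (h | h)
    · obtain ⟨N, hN⟩ := ev_one h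
      exact ⟨1, one_pos, N, fun n hn => by rw [hN (n+1) (by omega), hN n hn]⟩
    · obtain ⟨N, hN⟩ := ev_zero h
      exact ⟨1, one_pos, N, fun n hn => by rw [hN (n+1) (by omega), hN n hn]⟩
end

section
/- Every finite Sturmian word over {a,b} is uniquely determined, up to exchanging the letters a and b, by its oc-sequence: if u and v are finite Sturmian words with oc(u) = oc(v), then u = v or u is obtained from v by swapping a and b. -/
open scoped Classical

variable {α : Type*}

lemma take_succ_getElem (l : List α) {n : ℕ} (h : n < l.length) :
    l.take (n+1) = l.take n ++ [l[n]] := by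
  rw [List.take_succ, List.getElem?_eq_getElem h]; rfl

lemma internalOcc_nil {w : List α} (h : 2 ≤ w.length) : InternalOcc ([] : List α) w := by
  match w, h with
  | a :: b :: t, _ => exact ⟨[a], b :: t, by simp, by simp, by simp⟩

lemma suffix_concat {u w : List α} {x : α} (h : u <:+ w ++ [x]) (hu : u ≠ []) :
    ∃ u', u = u' ++ [x] ∧ u' <:+ w := by
  obtain ⟨p, hp⟩ := h
  have h2 : (p ++ u.dropLast) ++ [u.getLast hu] = w ++ [x] := by
    rw [List.append_assoc, List.dropLast_append_getLast hu]; exact hp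
  obtain ⟨h3, h4⟩ := List.append_inj' h2 rfl
  have hx : u.getLast hu = x := by simpa using h4
  exact ⟨u.dropLast, by rw [← hx, List.dropLast_append_getLast hu], ⟨p, h3⟩⟩

lemma prefix_concat {u w : List α} {x : α} (h : u <+: w ++ [x]) (hle : u.length ≤ w.length) :
    u <+: w := by
  have h1 := List.prefix_iff_eq_take.mp h
  rw [List.take_append_of_le_length hle] at h1
  exact h1 ▸ List.take_prefix _ _

lemma border_length {u w : List α} (h : IsBorder u w) : u.length < w.length := by
  rcases lt_or_eq_of_le h.1.length_le with h' | h'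
  · exact h'
  · exact absurd (h.1.eq_of_length h') h.2.2

lemma internalOcc_of_occ {u w : List α} {x : α} {i : ℕ} (hi : 1 ≤ i) (hiw : i ≤ w.length)
    (h : u <+: w.drop i) : InternalOcc u (w ++ [x]) := by
  obtain ⟨r, hr⟩ := h
  refine ⟨w.take i, r ++ [x], ?_, by simp, ?_⟩
  · have : (w.take i).length = min i w.length := List.length_take
    intro hc; rw [hc] at this; simp at this; omega
  · have : w ++ [x] = w.take i ++ w.drop i ++ [x] := by simp
    rw [this, ← hr]; simp

lemma not_both_closed_aux {w : List α} {x y : α} (hw : w ≠ []) (hxy : x ≠ y)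
    {u v : List α}
    (hub : IsBorder u (w ++ [x])) (hnu : ¬ InternalOcc u (w ++ [x]))
    (hvb : IsBorder v (w ++ [y])) (hnv : ¬ InternalOcc v (w ++ [y]))
    (hle : u.length ≤ v.length) : False := by
  have hwlen : 1 ≤ w.length := List.length_pos_iff.mpr hw
  have hune : u ≠ [] := by
    rintro rfl; exact hnu (internalOcc_nil (by simp; omega))
  have hvne : v ≠ [] := by
    rintro rfl; exact hnv (internalOcc_nil (by simp; omega))
  have hulen : u.length ≤ w.length := by
    have := border_length hub; simp at this; omega
  have hvlen : v.length ≤ w.length := by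
    have := border_length hvb; simp at this; omega
  obtain ⟨u', hu', _⟩ := suffix_concat hub.2.1 hune
  obtain ⟨v', hv', hv's⟩ := suffix_concat hvb.2.1 hvne
  have hupw : u <+: w := prefix_concat hub.1 hulen
  have hvpw : v <+: w := prefix_concat hvb.1 hvlen
  rcases eq_or_lt_of_le hle with heq | hlt
  · have huv : u = v := by
      have h1 := List.prefix_iff_eq_take.mp hupw
      have h2 := List.prefix_iff_eq_take.mp hvpw
      rw [h1, h2, heq]
    rw [hu', hv'] at huv
    obtain ⟨-, h2⟩ := List.append_inj' huv rfl
    exact hxy (by simpa using h2)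
  · have hv'len : v'.length + 1 = v.length := by rw [hv']; simp
    have hlv' : u.length ≤ v'.length := by omega
    have hv'pw : v' <+: w := by
      rw [hv'] at hvpw; exact (List.prefix_append v' [y]).trans hvpw
    have hupv' : u <+: v' := by
      have h1 := List.prefix_iff_eq_take.mp hupw
      have h2 := List.prefix_iff_eq_take.mp hv'pw
      have h3 : v'.take u.length = u := by
        rw [h2, List.take_take, min_eq_left hlv', ← h1]
      exact h3 ▸ List.take_prefix u.length v'
  -- internal occurrence of u in w ++ [x]
    obtain ⟨q, hq⟩ := hv's
    have hqlen : q.length + v'.length = w.length := by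
      have := congrArg List.length hq; simpa using this
    have hdropq : w.drop q.length = v' := by rw [← hq, List.drop_left]
    exact hnu (internalOcc_of_occ (by omega) (by omega) (hdropq ▸ hupv'))

lemma not_both_closed {w : List α} {x y : α} (hw : w ≠ []) (hxy : x ≠ y)
    (hx : ClosedWord (w ++ [x])) (hy : ClosedWord (w ++ [y])) : False := by
  rcases hx with h | ⟨u, hub, hnu⟩
  · simp at h
  rcases hy with h | ⟨v, hvb, hnv⟩
  · simp at h
  rcases le_total u.length v.length with h | h
  · exact not_both_closed_aux hw hxy hub hnu hvb hnv h
  · exact not_both_closed_aux hw hxy.symm hvb hnv hub hnu h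

lemma bal_viol {t : List Bool} {x₁ x₂ : Bool} (h12 : x₁ ≠ x₂)
    (h : ((((x₁ :: t) ++ [x₁]).count true : ℤ) - (((x₂ :: t) ++ [x₂]).count true)).natAbs ≤ 1) :
    False := by
  cases x₁ <;> cases x₂ <;>
    simp [List.count_append, List.count_cons] at h h12 <;> omega

lemma suffix_append_singleton {u w : List Bool} {x : Bool} (h : u <:+ w) :
    u ++ [x] <:+ w ++ [x] := by
  obtain ⟨q, hq⟩ := h
  exact ⟨q, by rw [← List.append_assoc, hq]⟩

lemma exists_closed_ext (w : List Bool) (hw : w ≠ [])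
    (hbal : ∀ z : Bool, BalancedWord (w ++ [z])) :
    ∃ z : Bool, ClosedWord (w ++ [z]) := by
  have hn1 : 1 ≤ w.length := List.length_pos_iff.mpr hw
  obtain ⟨m, hm⟩ : ∃ k, k = Nat.findGreatest (fun k => k < w.length ∧ w.take k <:+ w) w.length :=
    ⟨_, rfl⟩
  have hPm : m < w.length ∧ w.take m <:+ w := by
    rw [hm]
    exact Nat.findGreatest_spec (P := fun k => k < w.length ∧ w.take k <:+ w)
      (Nat.zero_le _) ⟨hn1, by simp⟩
  have hmax : ∀ k, m < k → k < w.length → ¬ (w.take k <:+ w) := by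
    intro k h1 h2 h3
    rw [hm] at h1
    exact (Nat.findGreatest_is_greatest h1 (le_of_lt h2)) ⟨h2, h3⟩
  have hmw : m < w.length := hPm.1
  obtain ⟨B, hB⟩ : ∃ l, l = w.take (m+1) := ⟨_, rfl⟩
  have hBlen : B.length = m + 1 := by rw [hB, List.length_take]; omega
  refine ⟨w[m], Or.inr ⟨B, ⟨?_, ?_, ?_⟩, ?_⟩⟩
  · rw [hB]; exact (List.take_prefix _ _).trans (List.prefix_append _ _)
  · obtain ⟨p, hp⟩ := hPm.2
    refine ⟨p, ?_⟩
    rw [hB, take_succ_getElem _ hmw, ← List.append_assoc, hp]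
  · intro hcontra
    have := congrArg List.length hcontra
    rw [hBlen, List.length_append, List.length_cons] at this
    simp at this; omega
  · rintro ⟨p, s, hpne, hsne, heq⟩
    have hs' : p ++ B ++ s = (p ++ B ++ s.dropLast) ++ [s.getLast hsne] := by
      conv_lhs => rw [← List.dropLast_append_getLast hsne]
      simp [List.append_assoc]
    have hw' : w = p ++ B ++ s.dropLast := (List.append_inj' (heq.trans hs') rfl).1
    have hi1 : 1 ≤ p.length := List.length_pos_iff.mpr hpne
    have hlen_eq : w.length = p.length + (m+1) + s.dropLast.length := by
      have h2 : w.length = p.length + B.length + s.dropLast.length := by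
        rw [hw']; simp [List.length_append]; omega
      omega
    by_cases hsd : s.dropLast = []
    · rw [hsd, List.append_nil] at hw'
      have hBsuf : w.take (m+1) <:+ w := ⟨p, by rw [← hB, ← hw']⟩
      rw [hsd] at hlen_eq; simp at hlen_eq
      exact hmax (m+1) (by omega) (by omega) hBsuf
    · have hsdlen : 1 ≤ s.dropLast.length := List.length_pos_iff.mpr hsd
      have him : p.length + (m+1) < w.length := by omega
      have hdropi : w.drop p.length = B ++ s.dropLast := by
        conv_lhs => rw [hw', List.append_assoc]
        exact List.drop_left
      obtain ⟨K, hK⟩ : ∃ k, k = Nat.findGreatest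
          (fun k => w.take k <+: w.drop p.length) (w.length - p.length) := ⟨_, rfl⟩
      have hQm1 : w.take (m+1) <+: w.drop p.length := by
        rw [hdropi, ← hB]; exact List.prefix_append B s.dropLast
      have hm1ni : m + 1 ≤ w.length - p.length := by omega
      have hK1 : m + 1 ≤ K := by
        rw [hK]
        exact Nat.le_findGreatest (P := fun k => w.take k <+: w.drop p.length) hm1ni hQm1
      have hQK : w.take K <+: w.drop p.length := by
        rw [hK]
        exact Nat.findGreatest_spec (P := fun k => w.take k <+: w.drop p.length) hm1ni hQm1
      have hKle : K ≤ w.length - p.length := by rw [hK]; exact Nat.findGreatest_le _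
      have hKlt : K < w.length - p.length := by
        rcases lt_or_eq_of_le hKle with h | h
        · exact h
        exfalso
        have heqQ : w.take K = w.drop p.length :=
          hQK.eq_of_length (by simp; omega)
        exact hmax K (by omega) (by omega) (heqQ ▸ List.drop_suffix p.length w)
      have hKw : K < w.length := by omega
      have hiKw : p.length + K < w.length := by omega
      have hnQ : ¬ (w.take (K+1) <+: w.drop p.length) := by
        have := Nat.findGreatest_is_greatest (P := fun k => w.take k <+: w.drop p.length)
          (n := w.length - p.length) (k := K + 1) (by omega) (by omega)
        exact this
      have hKd : K < (w.drop p.length).length := by simp; omega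
      have hltK : (w.take K).length = K := by simp; omega
      have htakeKdrop : (w.drop p.length).take K = w.take K := by
        have h1 := List.prefix_iff_eq_take.mp hQK
        rw [hltK] at h1; exact h1.symm
      obtain ⟨f, hf⟩ : ∃ b, w[K]'hKw = b := ⟨_, rfl⟩
      obtain ⟨e, he⟩ : ∃ b, w[p.length + K]'hiKw = b := ⟨_, rfl⟩
      have hdropgetK : (w.drop p.length)[K]'hKd = e := by rw [List.getElem_drop, he]
      have hfe : f ≠ e := by
        intro hfeq
        apply hnQ
        have h2 : (w.drop p.length).take (K+1) = w.take K ++ [e] := by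
          rw [take_succ_getElem _ hKd, htakeKdrop, hdropgetK]
        have h3 : w.take (K+1) = w.take K ++ [f] := by
          rw [take_succ_getElem _ hKw, hf]
        rw [h3, hfeq, ← h2]; exact List.take_prefix _ _
      obtain ⟨A, hA⟩ : ∃ l, l = w.take K := ⟨_, rfl⟩
      obtain ⟨C, hC⟩ : ∃ l, l = w.drop (w.length - K) := ⟨_, rfl⟩
      have hAlen : A.length = K := by rw [hA]; simp; omega
      have hClen : C.length = K := by rw [hC]; simp; omega
      have hAC : A ≠ C := by
        intro hACeq
        refine hmax K (by omega) hKw ?_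
        rw [← hA, hACeq, hC]; exact List.drop_suffix _ _
      obtain ⟨M, hM⟩ : ∃ k, k = Nat.findGreatest (fun k => A.drop (K - k) = C.drop (K - k)) K :=
        ⟨_, rfl⟩
      have hR0 : A.drop (K - 0) = C.drop (K - 0) := by
        rw [List.drop_eq_nil_of_le (by omega), List.drop_eq_nil_of_le (by omega)]
      have hRM : A.drop (K - M) = C.drop (K - M) := by
        rw [hM]
        exact Nat.findGreatest_spec (P := fun k => A.drop (K - k) = C.drop (K - k))
          (Nat.zero_le _) hR0
      have hMle : M ≤ K := by rw [hM]; exact Nat.findGreatest_le _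
      have hMlt : M < K := by
        rcases lt_or_eq_of_le hMle with h | h
        · exact h
        exfalso; apply hAC
        have h2 := hRM
        rwa [h, Nat.sub_self, List.drop_zero, List.drop_zero] at h2
      have hj1 : (K - M - 1) + 1 = K - M := by omega
      have hjA : K - M - 1 < A.length := by omega
      have hjC : K - M - 1 < C.length := by omega
      obtain ⟨x₁, hx1⟩ : ∃ b, A[K - M - 1]'hjA = b := ⟨_, rfl⟩
      obtain ⟨x₂, hx2⟩ : ∃ b, C[K - M - 1]'hjC = b := ⟨_, rfl⟩
      have hdropA : A.drop (K - M - 1) = x₁ :: A.drop (K - M) := by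
        rw [List.drop_eq_getElem_cons hjA, hx1, hj1]
      have hdropC : C.drop (K - M - 1) = x₂ :: C.drop (K - M) := by
        rw [List.drop_eq_getElem_cons hjC, hx2, hj1]
      have hx12 : x₁ ≠ x₂ := by
        intro hxeq
        have hRM1 : A.drop (K - (M+1)) = C.drop (K - (M+1)) := by
          have hKM1 : K - (M+1) = K - M - 1 := by omega
          rw [hKM1, hdropA, hdropC, hxeq, hRM]
        have := Nat.findGreatest_is_greatest
          (P := fun k => A.drop (K - k) = C.drop (K - k)) (n := K) (k := M + 1)
          (by omega) (by omega)
        exact this hRM1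
      have hxt_suffA : (x₁ :: A.drop (K - M)) <:+ A := hdropA ▸ List.drop_suffix (K - M - 1) A
      have hxt_suffC : (x₂ :: A.drop (K - M)) <:+ C := by
        rw [hRM]; exact hdropC ▸ List.drop_suffix (K - M - 1) C
      have hinfix1 : (x₁ :: A.drop (K - M)) ++ [x₁] <:+: w := by
        by_cases hx1f : x₁ = f
        · subst hx1f
          have h3 : w.take (K+1) = A ++ [x₁] := by
            rw [take_succ_getElem _ hKw, hf, hA]
          have hsf : (x₁ :: A.drop (K - M)) ++ [x₁] <:+ w.take (K+1) := by
            rw [h3]; exact suffix_append_singleton hxt_suffA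
          exact hsf.isInfix.trans (List.take_prefix _ _).isInfix
        · have hx1e : x₁ = e := by
            revert hx1f hfe; cases x₁ <;> cases f <;> cases e <;> decide
          subst hx1e
          have h3 : (w.drop p.length).take (K+1) = A ++ [x₁] := by
            rw [take_succ_getElem _ hKd, htakeKdrop, hdropgetK, hA]
          have hsf : (x₁ :: A.drop (K - M)) ++ [x₁] <:+ (w.drop p.length).take (K+1) := by
            rw [h3]; exact suffix_append_singleton hxt_suffA
          exact hsf.isInfix.trans ((List.take_prefix _ _).isInfix.trans
            (List.drop_suffix p.length w).isInfix)
      have hsuffix2 : (x₂ :: A.drop (K - M)) <:+ w :=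
        hxt_suffC.trans (hC ▸ List.drop_suffix (w.length - K) w)
      exfalso
      have hF1 : (x₁ :: A.drop (K - M)) ++ [x₁] <:+: w ++ [x₂] :=
        hinfix1.trans (List.prefix_append w [x₂]).isInfix
      have hF2 : (x₂ :: A.drop (K - M)) ++ [x₂] <:+: w ++ [x₂] :=
        (suffix_append_singleton hsuffix2).isInfix
      exact bal_viol hx12 (hbal x₂ _ _ hF1 hF2 (by simp))

lemma map_not_map_not (l : List Bool) : (l.map (fun c => !c)).map (fun c => !c) = l := by
  simp [List.map_map, Function.comp_def]

lemma closed_map_not {w : List Bool} (h : ClosedWord w) : ClosedWord (w.map (fun c => !c)) := by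
  rcases h with rfl | ⟨u, hb, hn⟩
  · exact Or.inl rfl
  refine Or.inr ⟨u.map (fun c => !c), ⟨hb.1.map _, hb.2.1.map _, ?_⟩, ?_⟩
  · intro hc
    apply hb.2.2
    have := congrArg (List.map (fun c : Bool => !c)) hc
    rwa [map_not_map_not, map_not_map_not] at this
  · rintro ⟨p, s, hp, hs, heq⟩
    apply hn
    refine ⟨p.map (fun c => !c), s.map (fun c => !c), by simpa using hp, by simpa using hs, ?_⟩
    have := congrArg (List.map (fun c : Bool => !c)) heq
    rw [map_not_map_not] at this
    rw [this]; simp [List.map_append, List.map_map, Function.comp_def]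

lemma closed_map_not_iff (w : List Bool) :
    ClosedWord (w.map (fun c => !c)) ↔ ClosedWord w := by
  constructor
  · intro h
    have := closed_map_not h
    rwa [map_not_map_not] at this
  · exact closed_map_not

lemma count_true_map_not (l : List Bool) :
    (l.map (fun c => !c)).count true + l.count true = l.length := by
  induction l with
  | nil => simp
  | cons a l ih => cases a <;> simp [List.count_cons] <;> omega

lemma balanced_map_not {w : List Bool} (h : BalancedWord w) :
    BalancedWord (w.map (fun c => !c)) := by
  intro u v hu hv hlen
  have hu' : u.map (fun c => !c) <:+: w := by
    have := hu.map (fun c : Bool => !c)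
    rwa [map_not_map_not] at this
  have hv' : v.map (fun c => !c) <:+: w := by
    have := hv.map (fun c : Bool => !c)
    rwa [map_not_map_not] at this
  have hb := h _ _ hu' hv' (by simp [hlen])
  have c1 := count_true_map_not u
  have c2 := count_true_map_not v
  have l1 : (u.map (fun c => !c)).length = u.length := by simp
  have l2 : (v.map (fun c => !c)).length = v.length := by simp
  omega

lemma balanced_infix {u w : List Bool} (h : BalancedWord w) (hi : u <:+: w) : BalancedWord u :=
  fun a b ha hb hl => h a b (ha.trans hi) (hb.trans hi) hl

lemma ocL_concat (w : List α) (x : α) :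
    ocL (w ++ [x]) = ocL w ++ [if ClosedWord (w ++ [x]) then 1 else 0] := by
  unfold ocL
  rw [List.length_append, List.length_singleton, List.range_succ, List.map_append]
  congr 1
  · apply List.map_congr_left
    intro i hi
    rw [List.mem_range] at hi
    rw [List.take_append_of_le_length (by omega)]
  · simp only [List.map_singleton]
    congr 2
    rw [List.take_of_length_le (by simp)]

lemma core_ext {w : List Bool} {x y : Bool} (hw : w ≠ []) (hbx : BalancedWord (w ++ [x]))
    (hby : BalancedWord (w ++ [y]))
    (hflag : ClosedWord (w ++ [x]) ↔ ClosedWord (w ++ [y])) : x = y := by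
  by_contra hxy
  have hball : ∀ z : Bool, BalancedWord (w ++ [z]) := by
    intro z
    have hzx : z = x ∨ z = y := by
      cases x <;> cases y <;> cases z <;>
        first | (left; rfl) | (right; rfl) | (exact absurd rfl hxy)
    rcases hzx with rfl | rfl <;> assumption
  obtain ⟨z, hz⟩ := exists_closed_ext w hw hball
  have hzx : z = x ∨ z = y := by
    cases x <;> cases y <;> cases z <;>
      first | (left; rfl) | (right; rfl) | (exact absurd rfl hxy)
  have hcx : ClosedWord (w ++ [x]) := by
    rcases hzx with rfl | rfl
    · exact hz
    · exact hflag.mpr hz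
  exact not_both_closed hw hxy hcx (hflag.mp hcx)

lemma singleton_case (x y : Bool) : [x] = [y] ∨ [x] = [y].map (fun c => !c) := by
  cases x <;> cases y <;> simp

theorem stmt12 (u v : List Bool) (hu : BalancedWord u) (hv : BalancedWord v)
    (h : ocL u = ocL v) : u = v ∨ u = v.map (fun c => !c) := by
  induction u using List.reverseRecOn generalizing v with
  | nil =>
    left
    have := congrArg List.length h
    simp [ocL] at this
    exact (List.eq_nil_of_length_eq_zero this.symm).symm
  | append_singleton u' x ih =>
    rcases v.eq_nil_or_concat with rfl | ⟨v', y, rfl⟩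
    · exfalso
      have := congrArg List.length h
      simp [ocL] at this
    · rw [List.concat_eq_append] at *
      rw [ocL_concat, ocL_concat] at h
      obtain ⟨h1, h2⟩ := List.append_inj' h rfl
      have hflag : ClosedWord (u' ++ [x]) ↔ ClosedWord (v' ++ [y]) := by
        by_cases hcu : ClosedWord (u' ++ [x]) <;> by_cases hcv : ClosedWord (v' ++ [y]) <;>
          simp [hcu, hcv] at h2 ⊢
      have hu' : BalancedWord u' := balanced_infix hu (List.prefix_append _ _).isInfix
      have hv' : BalancedWord v' := balanced_infix hv (List.prefix_append _ _).isInfix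
      rcases ih v' hu' hv' h1 with heq | hneg
      · subst heq
        by_cases hnil : u' = []
        · subst hnil; exact singleton_case x y
        · have hxy : x = y := core_ext hnil hu hv hflag
          left; rw [hxy]
      · by_cases hnil : v' = []
        · subst hnil
          simp at hneg
          subst hneg
          exact singleton_case x y
        · have hwne : u' ≠ [] := by
            rw [hneg]; simp [hnil]
          have hbal2 : BalancedWord (u' ++ [!y]) := by
            have := balanced_map_not hv
            rw [List.map_append] at this
            rwa [← hneg] at this
          have hflag2 : ClosedWord (u' ++ [x]) ↔ ClosedWord (u' ++ [!y]) := by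
            rw [hflag]
            have : u' ++ [!y] = (v' ++ [y]).map (fun c => !c) := by
              rw [List.map_append, ← hneg]; simp
            rw [this, closed_map_not_iff]
          have hxy : x = !y := core_ext hwne hu hbal2 hflag2
          right
          rw [hxy, hneg, List.map_append]
          simp
end
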